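/- Let c > 0 and ω ∈ (-π, π] with ω ≠ 0. The point −1 ∈ ℂ lies outside the closed disk of center c/(e^{iω}−1) and radius |c/(e^{iω}−1)| if and only if c < 1. -/

import Mathlib

/-- For `c > 0` and `ω ∈ (-π, π]`, `ω ≠ 0`, the point `-1 ∈ ℂ` lies outside the closed
disk with center `F = c / (e^{iω} - 1)` and radius `|F|` if and only if `c < 1`. -/
theorem stmt_7 (c ω : ℝ) (hc : 0 < c) (hω : ω ∈ Set.Ioc (-Real.pi) Real.pi) (hω0 : ω ≠ 0) :
    (-1 : ℂ) ∉ Metric.closedBall ((c : ℂ) / (Complex.exp (ω * Complex.I) - 1))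
      ‖(c : ℂ) / (Complex.exp (ω * Complex.I) - 1)‖ ↔ c < 1 := by
  obtain ⟨hω1, hω2⟩ := hω
  have hcos : Real.cos ω < 1 := by
    rcases lt_or_gt_of_ne hω0 with h | h
    · have := Real.cos_lt_cos_of_nonneg_of_le_pi (le_refl 0) (by linarith) (by linarith : 0 < -ω)
      rw [Real.cos_neg] at this
      simpa using this
    · have := Real.cos_lt_cos_of_nonneg_of_le_pi (le_refl 0) hω2 h
      simpa using this
  set z : ℂ := Complex.exp ((ω : ℂ) * Complex.I) - 1 with hzdef
  have hre : z.re = Real.cos ω - 1 := by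
    simp [hzdef, Complex.exp_ofReal_mul_I_re]
  have him : z.im = Real.sin ω := by
    simp [hzdef, Complex.exp_ofReal_mul_I_im]
  have hz : z ≠ 0 := by
    intro h
    rw [h] at hre
    simp at hre
    linarith
  have habs : 0 < ‖z‖ := by
    simpa using (norm_pos_iff.mpr hz)
  have hFabs : ‖(c : ℂ) / z‖ = c / ‖z‖ := by
    rw [norm_div, Complex.norm_of_nonneg hc.le]
  have hdist : ‖(-1 : ℂ) - (c : ℂ) / z‖ = ‖z + c‖ / ‖z‖ := by
    rw [show (-1 : ℂ) - (c : ℂ) / z = -((z + c) / z) by field_simp; ring]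
    rw [norm_neg, norm_div]
  have hsq : ‖z + c‖ ^ 2 = c ^ 2 + 2 * (Real.cos ω - 1) * (c - 1) := by
    rw [Complex.sq_norm, Complex.normSq_apply]
    have h1 : (z + c).re = Real.cos ω - 1 + c := by simp [hre]
    have h2 : (z + c).im = Real.sin ω := by simp [him]
    rw [h1, h2]
    nlinarith [Real.sin_sq_add_cos_sq ω]
  have key : c < ‖z + c‖ ↔ c < 1 := by
    constructor
    · intro h
      have : c ^ 2 < ‖z + c‖ ^ 2 := by
        nlinarith [norm_nonneg (z + c)]
      rw [hsq] at this
      nlinarith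
    · intro h
      have h2 : c ^ 2 < ‖z + c‖ ^ 2 := by
        rw [hsq]; nlinarith
      nlinarith [norm_nonneg (z + c)]
  rw [Metric.mem_closedBall, Complex.dist_eq, not_le, hFabs, hdist,
    div_lt_div_iff_of_pos_right habs]
  exact key
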